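/- Let α > 0, set ω = √(3^(−α/2)·α) and c = ω²·(1 + 3α/2), and let B₃ = B(ω,c,c) be the 4×4 real matrix with rows (0,0,1,0), (0,0,0,1), (c,0,0,2ω), (0,c,−2ω,0). Then the characteristic polynomial of B₃ is X⁴ + ω²(2−3α)·X² + ω⁴(1+3α/2)², its four complex eigenvalues are ±(ω/√2)·√(3α − 2 ± 2i√(6α)), every eigenvalue has nonzero real part, and at least one eigenvalue has strictly positive real part. Consequently, the relative equilibrium of three equal masses at the equilateral triangle central configuration under the α-homogeneous potential is spectrally unstable for every α > 0. -/

import Mathlib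

open Polynomial

/-- The linearization matrix of the planar system `ẍ = 2ωJẋ + diag(c₁,c₂)x`. -/
def B (ω c₁ c₂ : ℝ) : Matrix (Fin 4) (Fin 4) ℝ :=
  !![0, 0, 1, 0;
     0, 0, 0, 1;
     c₁, 0, 0, 2*ω;
     0, c₂, -(2*ω), 0]

/-- The angular speed `ω = √(3^(−α/2)·α)` of the equilateral triangle relative
equilibrium under the α-homogeneous potential. -/
noncomputable def ωtri (α : ℝ) : ℝ := Real.sqrt ((3:ℝ) ^ (-(α/2)) * α)

/-- `c = ω²·(1 + 3α/2)`, the entry of the essential block `B₃ = B(ω,c,c)`. -/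
noncomputable def ctri (α : ℝ) : ℝ := (ωtri α) ^ 2 * (1 + 3 * α / 2)

/-- `μ₊ = (ω/√2)·√(3α − 2 + 2i√(6α))`, one of the eigenvalues of `B₃`. -/
noncomputable def μtriP (α : ℝ) : ℂ :=
  ((ωtri α : ℂ) / (Real.sqrt 2 : ℂ)) *
    (((3 * α - 2 : ℝ) : ℂ) + 2 * (Real.sqrt (6 * α) : ℂ) * Complex.I) ^ (1/2 : ℂ)

/-- `μ₋ = (ω/√2)·√(3α − 2 − 2i√(6α))`, one of the eigenvalues of `B₃`. -/
noncomputable def μtriM (α : ℝ) : ℂ :=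
  ((ωtri α : ℂ) / (Real.sqrt 2 : ℂ)) *
    (((3 * α - 2 : ℝ) : ℂ) - 2 * (Real.sqrt (6 * α) : ℂ) * Complex.I) ^ (1/2 : ℂ)

/-- Characteristic polynomial of `B ω c c`. -/
lemma charpoly_B (ω c : ℝ) : (B ω c c).charpoly =
    X ^ 4 + C (4*ω^2 - 2*c) * X ^ 2 + C (c^2) := by
  have h : (B ω c c).charmatrix =
      !![X, 0, -1, 0; 0, X, 0, -1; -C c, 0, X, -C (2*ω); 0, -C c, C (2*ω), X] := by
    ext i j
    fin_cases i <;> fin_cases j <;>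
      simp [Matrix.charmatrix_apply, B, Matrix.diagonal_apply]
  rw [Matrix.charpoly, h]
  simp [Matrix.det_succ_row_zero, Fin.sum_univ_succ]
  simp [Fin.succAbove, Fin.lt_iff_val_lt_val]
  simp only [map_ofNat]
  ring

lemma quartic_factor (a b : ℂ) : (X - C a) * (X + C a) * (X - C b) * (X + C b)
    = X^4 - C (a^2 + b^2) * X^2 + C (a^2 * b^2) := by
  simp only [map_add, map_mul, map_pow]
  ring

/-- The essential block of the linearization at the equilateral triangle relative
equilibrium under the α-homogeneous potential is spectrally unstable for all `α > 0`. -/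
theorem B₃_triangle_alpha_unstable (α : ℝ) (hα : 0 < α) :
    (B (ωtri α) (ctri α) (ctri α)).charpoly =
      X ^ 4 + C ((ωtri α) ^ 2 * (2 - 3 * α)) * X ^ 2 +
        C ((ωtri α) ^ 4 * (1 + 3 * α / 2) ^ 2) ∧
    ((B (ωtri α) (ctri α) (ctri α)).map (Complex.ofReal)).charpoly =
      (X - C (μtriP α)) * (X + C (μtriP α)) * (X - C (μtriM α)) * (X + C (μtriM α)) ∧
    (∀ μ : ℂ,
      (((B (ωtri α) (ctri α) (ctri α)).map (Complex.ofReal)).charpoly).IsRoot μ →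
        μ.re ≠ 0) ∧
    (∃ μ : ℂ,
      (((B (ωtri α) (ctri α) (ctri α)).map (Complex.ofReal)).charpoly).IsRoot μ ∧
        0 < μ.re) := by
  have hω : 0 < ωtri α := by unfold ωtri; positivity
  set s : ℝ := Real.sqrt (6 * α) with hs_def
  have hs : 0 < s := Real.sqrt_pos.mpr (by linarith)
  have hs2 : (s:ℂ)^2 = 6*(α:ℂ) := by
    have : s^2 = 6*α := Real.sq_sqrt (by linarith)
    exact_mod_cast this
  have h2 : ((Real.sqrt 2 : ℝ) : ℂ)^2 = 2 := by
    norm_cast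
    exact Real.sq_sqrt (by norm_num)
  set zP : ℂ := ((3 * α - 2 : ℝ) : ℂ) + 2 * (s : ℂ) * Complex.I with hzP_def
  set zM : ℂ := ((3 * α - 2 : ℝ) : ℂ) - 2 * (s : ℂ) * Complex.I with hzM_def
  have hzP : zP ≠ 0 := by
    intro h
    have := congrArg Complex.im h
    simp [hzP_def] at this
    linarith
  have hzM : zM ≠ 0 := by
    intro h
    have := congrArg Complex.im h
    simp [hzM_def] at this
    linarith
  have hcpow : ∀ z : ℂ, z ≠ 0 → (z ^ (1/2 : ℂ))^2 = z := by
    intro z hz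
    rw [sq, ← Complex.cpow_add _ _ hz]
    norm_num
  -- squares of the eigenvalues
  have hsqP : μtriP α ^ 2 = ((ωtri α : ℂ)^2 / 2) * zP := by
    rw [μtriP, mul_pow, div_pow, hcpow _ hzP, h2]
  have hsqM : μtriM α ^ 2 = ((ωtri α : ℂ)^2 / 2) * zM := by
    rw [μtriM, mul_pow, div_pow, hcpow _ hzM, h2]
  have hsum : μtriP α ^ 2 + μtriM α ^ 2 = -(((ωtri α) ^ 2 * (2 - 3 * α) : ℝ) : ℂ) := by
    rw [hsqP, hsqM, hzP_def, hzM_def]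
    push_cast
    ring
  have hprod : μtriP α ^ 2 * μtriM α ^ 2 = (((ωtri α) ^ 4 * (1 + 3 * α / 2) ^ 2 : ℝ) : ℂ) := by
    rw [hsqP, hsqM, hzP_def, hzM_def]
    push_cast
    linear_combination (-((ωtri α : ℂ)^4 * (s:ℂ)^2)) * Complex.I_sq + (ωtri α : ℂ)^4 * hs2
  -- part 1
  have h1 : (B (ωtri α) (ctri α) (ctri α)).charpoly =
      X ^ 4 + C ((ωtri α) ^ 2 * (2 - 3 * α)) * X ^ 2 +
        C ((ωtri α) ^ 4 * (1 + 3 * α / 2) ^ 2) := by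
    rw [charpoly_B,
      show (4*(ωtri α)^2 - 2*ctri α) = (ωtri α)^2 * (2 - 3*α) by rw [ctri]; ring,
      show (ctri α)^2 = (ωtri α)^4 * (1 + 3*α/2)^2 by rw [ctri]; ring]
  -- part 2
  have h2' : ((B (ωtri α) (ctri α) (ctri α)).map (Complex.ofReal)).charpoly =
      (X - C (μtriP α)) * (X + C (μtriP α)) * (X - C (μtriM α)) * (X + C (μtriM α)) := by
    have hmap := Matrix.charpoly_map (B (ωtri α) (ctri α) (ctri α)) Complex.ofRealHom
    rw [show (⇑Complex.ofRealHom : ℝ → ℂ) = Complex.ofReal from rfl] at hmap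
    rw [hmap, h1, quartic_factor, hsum, hprod]
    simp only [Polynomial.map_add, Polynomial.map_mul, Polynomial.map_pow,
      Polynomial.map_X, Polynomial.map_C, map_neg, Complex.ofRealHom_eq_coe]
    ring
  -- real parts of μ₊, μ₋ are nonzero
  have himP : (μtriP α ^ 2).im = (ωtri α)^2 * s := by
    rw [hsqP, hzP_def]
    simp [← Complex.ofReal_pow, Complex.mul_im, Complex.add_im, Complex.div_im]
    ring
  have himM : (μtriM α ^ 2).im = -((ωtri α)^2 * s) := by
    rw [hsqM, hzM_def]
    simp [← Complex.ofReal_pow, Complex.mul_im, Complex.sub_im, Complex.div_im]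
    ring
  have key : ∀ μ : ℂ, (μ ^ 2).im ≠ 0 → μ.re ≠ 0 := by
    intro μ h h0
    apply h
    rw [sq, Complex.mul_im, h0]
    ring
  have hreP : (μtriP α).re ≠ 0 := by
    apply key
    rw [himP]
    positivity
  have hreM : (μtriM α).re ≠ 0 := by
    apply key
    rw [himM]
    intro h
    have : (ωtri α)^2 * s > 0 := by positivity
    linarith
  refine ⟨h1, h2', ?_, ?_⟩
  · intro μ hroot
    rw [h2'] at hroot
    simp only [Polynomial.IsRoot, eval_mul, eval_sub, eval_add, eval_X, eval_C,
      mul_eq_zero, sub_eq_zero, add_eq_zero_iff_eq_neg] at hroot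
    rcases hroot with ((h | h) | h) | h
    · rw [h]; exact hreP
    · rw [h]; simpa using hreP
    · rw [h]; exact hreM
    · rw [h]; simpa using hreM
  · have hrootP : (((B (ωtri α) (ctri α) (ctri α)).map (Complex.ofReal)).charpoly).IsRoot
        (μtriP α) := by
      rw [h2']; simp [Polynomial.IsRoot]
    have hrootP' : (((B (ωtri α) (ctri α) (ctri α)).map (Complex.ofReal)).charpoly).IsRoot
        (-(μtriP α)) := by
      rw [h2']; simp [Polynomial.IsRoot]
    rcases hreP.lt_or_gt with h | h
    · exact ⟨-(μtriP α), hrootP', by simpa using h⟩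
    · exact ⟨μtriP α, hrootP, h⟩
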